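/- Exact quadratic lifting of trajectories (Lemma 1): Suppose K and γ are symmetric (K i j = K j i, γ i j = γ j i). Let δ, v, a : ℝ → (Fin n → ℝ) and u : ℝ → ℝ be such that for every t, δ has derivative v(t) at t, v has derivative a(t) at t, and M·a(t) + D·v(t) + f(δ(t)) = u(t) • ℬ. Set q₁ = δ, q₂ = v, q₃ = sin ∘ δ, q₄ = cos ∘ δ (componentwise). Then for every t: (i) q₁ has derivative q₂(t) at t; (ii) q₃ has derivative q₂(t) ∘ q₄(t) at t; (iii) q₄ has derivative −q₂(t) ∘ q₃(t) at t; and (iv) M·a(t) = −D·q₂(t) + Z·(q₃(t) ⊗ q₄(t)) + Ψ·(q₄(t) ⊗ q₄(t)) + Ψ·(q₃(t) ⊗ q₃(t)) + u(t) • ℬ. In other words, the second-order nonlinear power network dynamics lift exactly to a quadratic system in (q₁, q₂, q₃, q₄). -/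

import Mathlib

open Matrix

noncomputable section

/-- Kronecker product of two vectors in `Fin n → ℝ`. -/
def kron {n : ℕ} (a b : Fin n → ℝ) : Fin n × Fin n → ℝ := fun p => a p.1 * b p.2

/-- The matrix `Z` of the lifted quadratic representation. -/
def Zmat {n : ℕ} (K γ : Fin n → Fin n → ℝ) : Matrix (Fin n) (Fin n × Fin n) ℝ :=
  Matrix.of fun i kj =>
    if i = kj.2 ∧ kj.2 ≠ kj.1 then K kj.1 kj.2 * Real.cos (γ kj.1 kj.2)
    else if i = kj.1 ∧ kj.2 ≠ kj.1 then -(K kj.1 kj.2 * Real.cos (γ kj.1 kj.2))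
    else 0

/-- The matrix `Ψ` of the lifted quadratic representation. -/
def Psimat {n : ℕ} (K γ : Fin n → Fin n → ℝ) : Matrix (Fin n) (Fin n × Fin n) ℝ :=
  Matrix.of fun i kj =>
    if (i = kj.2 ∧ kj.2 ≠ kj.1) ∨ (i = kj.1 ∧ kj.2 ≠ kj.1)
    then (1/2 : ℝ) * K kj.1 kj.2 * Real.sin (γ kj.1 kj.2) else 0

/-- The trigonometric coupling nonlinearity of the power network. -/
def powf {n : ℕ} (K γ : Fin n → Fin n → ℝ) (δ : Fin n → ℝ) : Fin n → ℝ :=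
  fun i => ∑ j ∈ Finset.univ.filter (fun j => j ≠ i), K i j * Real.sin (δ i - δ j - γ i j)


lemma Z_entry {n : ℕ} (K γ : Fin n → Fin n → ℝ) (i k j : Fin n) :
    Zmat K γ i (k, j) =
      ((if i = j then (1:ℝ) else 0) - (if i = k then 1 else 0)) *
        (if j ≠ k then K k j * Real.cos (γ k j) else 0) := by
  simp only [Zmat, Matrix.of_apply]
  by_cases h1 : i = j <;> by_cases h2 : i = k <;> by_cases h3 : j = k <;> simp_all

lemma Psi_entry {n : ℕ} (K γ : Fin n → Fin n → ℝ) (i k j : Fin n) :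
    Psimat K γ i (k, j) =
      ((if i = j then (1:ℝ) else 0) + (if i = k then 1 else 0)) *
        (if j ≠ k then (1/2 : ℝ) * K k j * Real.sin (γ k j) else 0) := by
  simp only [Psimat, Matrix.of_apply]
  by_cases h1 : i = j <;> by_cases h2 : i = k <;> by_cases h3 : j = k <;> simp_all

lemma Z_mulVec {n : ℕ} (K γ : Fin n → Fin n → ℝ) (A B : Fin n → ℝ) (i : Fin n) :
    (Zmat K γ).mulVec (kron A B) i =
      (∑ k, (if i ≠ k then K k i * Real.cos (γ k i) else 0) * (A k * B i))
      - ∑ j, (if j ≠ i then K i j * Real.cos (γ i j) else 0) * (A i * B j) := by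
  rw [Matrix.mulVec, dotProduct, Fintype.sum_prod_type]
  simp only [Z_entry, kron, sub_mul, ite_mul, one_mul, zero_mul, Finset.sum_sub_distrib,
    Finset.sum_ite_irrel, Finset.sum_const_zero, Finset.sum_ite_eq, Finset.mem_univ, if_true]

lemma Psi_mulVec {n : ℕ} (K γ : Fin n → Fin n → ℝ) (A B : Fin n → ℝ) (i : Fin n) :
    (Psimat K γ).mulVec (kron A B) i =
      (∑ k, (if i ≠ k then (1/2:ℝ) * K k i * Real.sin (γ k i) else 0) * (A k * B i))
      + ∑ j, (if j ≠ i then (1/2:ℝ) * K i j * Real.sin (γ i j) else 0) * (A i * B j) := by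
  rw [Matrix.mulVec, dotProduct, Fintype.sum_prod_type]
  simp only [Psi_entry, kron, add_mul, ite_mul, one_mul, zero_mul, Finset.sum_add_distrib,
    Finset.sum_ite_irrel, Finset.sum_const_zero, Finset.sum_ite_eq, Finset.mem_univ, if_true]

lemma lift_core {n : ℕ} (K γ : Fin n → Fin n → ℝ)
    (hK : ∀ i j, K i j = K j i) (hγ : ∀ i j, γ i j = γ j i) (x : Fin n → ℝ) (i : Fin n) :
    (Zmat K γ).mulVec (kron (fun i => Real.sin (x i)) (fun i => Real.cos (x i))) i
    + (Psimat K γ).mulVec (kron (fun i => Real.cos (x i)) (fun i => Real.cos (x i))) i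
    + (Psimat K γ).mulVec (kron (fun i => Real.sin (x i)) (fun i => Real.sin (x i))) i
    = - powf K γ x i := by
  simp only [Z_mulVec, Psi_mulVec, powf, Finset.sum_filter, ← Finset.sum_neg_distrib]
  rw [sub_add_eq_add_sub, sub_eq_add_neg, ← Finset.sum_neg_distrib]
  simp only [← Finset.sum_add_distrib]
  refine Finset.sum_congr rfl fun j _ => ?_
  by_cases hji : j = i
  · simp [hji]
  · have hij : i ≠ j := Ne.symm hji
    rw [Real.sin_sub (x i - x j) (γ i j), Real.sin_sub (x i) (x j), Real.cos_sub (x i) (x j)]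
    simp only [hK j i, hγ j i, if_pos hij, if_pos hji, ne_eq, hji, hij, not_false_iff, if_true]
    ring

/-- Lemma 1: exact quadratic lifting of trajectories of the
second-order nonlinear power network dynamics. -/
theorem exact_quadratic_lifting (n : ℕ) (hn : 1 ≤ n)
    (M D : Matrix (Fin n) (Fin n) ℝ) (ℬ : Fin n → ℝ)
    (K γ : Fin n → Fin n → ℝ)
    (hK : ∀ i j, K i j = K j i) (hγ : ∀ i j, γ i j = γ j i)
    (δ v a : ℝ → Fin n → ℝ) (u : ℝ → ℝ)
    (hδ : ∀ t, HasDerivAt δ (v t) t)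
    (hv : ∀ t, HasDerivAt v (a t) t)
    (hdyn : ∀ t, M.mulVec (a t) + D.mulVec (v t) + powf K γ (δ t) = u t • ℬ)
    (t : ℝ) :
    HasDerivAt δ (v t) t ∧
    HasDerivAt (fun s => fun i => Real.sin (δ s i))
      (fun i => v t i * Real.cos (δ t i)) t ∧
    HasDerivAt (fun s => fun i => Real.cos (δ s i))
      (fun i => -(v t i * Real.sin (δ t i))) t ∧
    M.mulVec (a t) =
      -(D.mulVec (v t))
      + (Zmat K γ).mulVec (kron (fun i => Real.sin (δ t i)) (fun i => Real.cos (δ t i)))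
      + (Psimat K γ).mulVec (kron (fun i => Real.cos (δ t i)) (fun i => Real.cos (δ t i)))
      + (Psimat K γ).mulVec (kron (fun i => Real.sin (δ t i)) (fun i => Real.sin (δ t i)))
      + u t • ℬ := by
  have hcomp : ∀ i, HasDerivAt (fun s => δ s i) (v t i) t := fun i =>
    (hasDerivAt_pi.mp (hδ t)) i
  refine ⟨hδ t, ?_, ?_, ?_⟩
  · rw [hasDerivAt_pi]
    intro i
    have := (Real.hasDerivAt_sin (δ t i)).comp t (hcomp i)
    simpa [mul_comm, Function.comp_def] using this
  · rw [hasDerivAt_pi]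
    intro i
    have := (Real.hasDerivAt_cos (δ t i)).comp t (hcomp i)
    simpa [mul_comm, Function.comp_def] using this
  · have hsum := hdyn t
    funext i
    have hcore := lift_core K γ hK hγ (δ t) i
    have h1 := congrFun hsum i
    simp only [Pi.add_apply, Pi.smul_apply, smul_eq_mul, Pi.neg_apply] at h1 hcore ⊢
    linarith
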